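/- Let A ∈ ℝ^{n×d}, C ∈ ℝ^{d×k} have integer entries in [−Δ₂,Δ₂], let w = 3√Δ₁·Δ₂²·n·d for some Δ₁ ≥ 1, and let B = [Aᵀ, wC]ᵀ ∈ ℝ^{(n+k)×d}. If N ∈ ℝ^{(n+k)×(2k)} satisfies ‖BBᵀ − NNᵀ‖_F² ≤ Δ₁·‖BBᵀ − (BBᵀ)_{2k}‖_F², then for every i ≤ n and j ≤ k, rounding (NNᵀ)_{i, n+j} to the nearest integer multiple of w yields exactly w·(AC)_{i,j}. -/

import Mathlib

open Matrix BigOperators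

noncomputable def frob {m n : Type*} [Fintype m] [Fintype n] (M : Matrix m n ℝ) : ℝ :=
  Real.sqrt (∑ i, ∑ j, (M i j) ^ 2)

def IsBestRank {ι : Type*} [Fintype ι] [DecidableEq ι] (r : ℕ) (M Mr : Matrix ι ι ℝ) : Prop :=
  Mr.rank ≤ r ∧ ∀ L : Matrix ι ι ℝ, L.rank ≤ r → frob (M - Mr) ≤ frob (M - L)

lemma frob_nonneg {m n : Type*} [Fintype m] [Fintype n] (M : Matrix m n ℝ) : 0 ≤ frob M :=
  Real.sqrt_nonneg _

lemma frob_sq {m n : Type*} [Fintype m] [Fintype n] (M : Matrix m n ℝ) :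
    frob M ^ 2 = ∑ i, ∑ j, (M i j) ^ 2 :=
  Real.sq_sqrt (by positivity)

lemma entry_sq_le_frob_sq {m n : Type*} [Fintype m] [Fintype n] (M : Matrix m n ℝ)
    (a : m) (b : n) : (M a b) ^ 2 ≤ frob M ^ 2 := by
  rw [frob_sq]
  calc (M a b) ^ 2 ≤ ∑ j, (M a j) ^ 2 :=
        Finset.single_le_sum (f := fun j => (M a j) ^ 2) (fun j _ => sq_nonneg _)
          (Finset.mem_univ b)
    _ ≤ ∑ i, ∑ j, (M i j) ^ 2 :=
        Finset.single_le_sum (f := fun i => ∑ j, (M i j) ^ 2)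
          (fun i _ => Finset.sum_nonneg fun j _ => sq_nonneg _) (Finset.mem_univ a)

theorem stmt15 (n d k : ℕ) (A : Matrix (Fin n) (Fin d) ℝ) (C : Matrix (Fin d) (Fin k) ℝ)
    (Δ₁ Δ₂ w : ℝ) (hΔ₁ : 1 ≤ Δ₁) (hΔ₂ : 0 < Δ₂)
    (hA : ∀ i j, (∃ z : ℤ, A i j = z) ∧ |A i j| ≤ Δ₂)
    (hC : ∀ i j, (∃ z : ℤ, C i j = z) ∧ |C i j| ≤ Δ₂)
    (hw : w = 3 * Real.sqrt Δ₁ * Δ₂ ^ 2 * n * d)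
    (B : Matrix (Fin n ⊕ Fin k) (Fin d) ℝ) (hB : B = Matrix.fromRows A (w • Cᵀ))
    (K2k : Matrix (Fin n ⊕ Fin k) (Fin n ⊕ Fin k) ℝ)
    (hK2k : IsBestRank (2 * k) (B * Bᵀ) K2k)
    (N : Matrix (Fin n ⊕ Fin k) (Fin (2 * k)) ℝ)
    (happrox : frob (B * Bᵀ - N * Nᵀ) ^ 2 ≤ Δ₁ * frob (B * Bᵀ - K2k) ^ 2) :
    ∀ (i : Fin n) (j : Fin k),
      w * (round ((N * Nᵀ) (Sum.inl i) (Sum.inr j) / w) : ℝ) = w * (A * C) i j := by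
  intro i j
  rcases eq_or_ne w 0 with hw0 | hw0
  · simp [hw0]
  have hΔ₁0 : (0:ℝ) < Δ₁ := lt_of_lt_of_le one_pos hΔ₁
  have hsΔ₁ : (1:ℝ) ≤ Real.sqrt Δ₁ := by
    rw [show (1:ℝ) = Real.sqrt 1 by simp]
    exact Real.sqrt_le_sqrt hΔ₁
  have hd : (0:ℝ) < d := by
    rcases Nat.eq_zero_or_pos d with h | h
    · exact absurd (by simp [hw, h]) hw0
    · exact_mod_cast h
  have hn : (0:ℝ) < n := by exact_mod_cast i.pos
  have hwpos : 0 < w := by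
    rw [hw]; positivity
  -- block decomposition of B * Bᵀ
  have hBB : B * Bᵀ = Matrix.fromBlocks (A * Aᵀ) (A * (w • Cᵀ)ᵀ)
      ((w • Cᵀ) * Aᵀ) ((w • Cᵀ) * (w • Cᵀ)ᵀ) := by
    rw [hB, Matrix.transpose_fromRows, Matrix.fromRows_mul_fromCols]
  -- the low rank competitor
  set L : Matrix (Fin n ⊕ Fin k) (Fin n ⊕ Fin k) ℝ :=
    Matrix.fromBlocks 0 (A * (w • Cᵀ)ᵀ) ((w • Cᵀ) * Aᵀ) ((w • Cᵀ) * (w • Cᵀ)ᵀ) with hL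
  have hLrank : L.rank ≤ 2 * k := by
    have hfact : L = (Matrix.fromBlocks (A * (w • Cᵀ)ᵀ) 0 0 1 :
        Matrix (Fin n ⊕ Fin k) (Fin k ⊕ Fin k) ℝ) *
        (Matrix.fromBlocks 0 1 ((w • Cᵀ) * Aᵀ) ((w • Cᵀ) * (w • Cᵀ)ᵀ) :
        Matrix (Fin k ⊕ Fin k) (Fin n ⊕ Fin k) ℝ) := by
      rw [Matrix.fromBlocks_multiply]
      simp [hL]
    rw [hfact]
    calc ((Matrix.fromBlocks (A * (w • Cᵀ)ᵀ) 0 0 1 :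
        Matrix (Fin n ⊕ Fin k) (Fin k ⊕ Fin k) ℝ) * _).rank
        ≤ (Matrix.fromBlocks (A * (w • Cᵀ)ᵀ) 0 0 1 :
            Matrix (Fin n ⊕ Fin k) (Fin k ⊕ Fin k) ℝ).rank := Matrix.rank_mul_le_left _ _
      _ ≤ Fintype.card (Fin k ⊕ Fin k) := Matrix.rank_le_card_width _
      _ = 2 * k := by simp [two_mul]
  -- difference is the top-left block
  have hdiff : B * Bᵀ - L = Matrix.fromBlocks (A * Aᵀ) 0 0 0 := by
    rw [hBB, hL]
    ext a b
    rcases a with a | a <;> rcases b with b | b <;>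
      simp [Matrix.sub_apply]
  -- entries of A * Aᵀ are bounded by d * Δ₂ ^ 2
  have hAAT : ∀ a b, |(A * Aᵀ) a b| ≤ d * Δ₂ ^ 2 := by
    intro a b
    calc |(A * Aᵀ) a b| = |∑ l, A a l * A b l| := by simp [Matrix.mul_apply]
      _ ≤ ∑ l, |A a l * A b l| := Finset.abs_sum_le_sum_abs _ _
      _ ≤ ∑ _l : Fin d, Δ₂ * Δ₂ := by
          apply Finset.sum_le_sum
          intro l _
          rw [abs_mul]
          exact mul_le_mul (hA a l).2 (hA b l).2 (abs_nonneg _) hΔ₂.le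
      _ = d * Δ₂ ^ 2 := by simp [sq]
  -- so frob (B*Bᵀ - L)^2 ≤ n^2 * (d * Δ₂^2)^2
  have hfrobL : frob (B * Bᵀ - L) ^ 2 ≤ n ^ 2 * (d * Δ₂ ^ 2) ^ 2 := by
    rw [frob_sq, hdiff]
    have hsum : ∑ a : Fin n ⊕ Fin k, ∑ b : Fin n ⊕ Fin k,
        ((Matrix.fromBlocks (A * Aᵀ) 0 0 0 : Matrix _ _ ℝ) a b) ^ 2
        = ∑ a : Fin n, ∑ b : Fin n, ((A * Aᵀ) a b) ^ 2 := by
      rw [Fintype.sum_sum_type]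
      simp [Fintype.sum_sum_type]
    rw [hsum]
    calc ∑ a : Fin n, ∑ b : Fin n, ((A * Aᵀ) a b) ^ 2
        ≤ ∑ _a : Fin n, ∑ _b : Fin n, (↑d * Δ₂ ^ 2) ^ 2 := by
          apply Finset.sum_le_sum; intro a _
          apply Finset.sum_le_sum; intro b _
          exact sq_le_sq' (abs_le.mp (hAAT a b)).1 (abs_le.mp (hAAT a b)).2
      _ = n ^ 2 * (↑d * Δ₂ ^ 2) ^ 2 := by
          simp [Finset.sum_const, sq]
          ring
  -- chain inequalities
  have hchain : frob (B * Bᵀ - N * Nᵀ) ^ 2 ≤ Δ₁ * (n ^ 2 * (d * Δ₂ ^ 2) ^ 2) := by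
    refine happrox.trans ?_
    apply mul_le_mul_of_nonneg_left _ hΔ₁0.le
    refine (pow_le_pow_left₀ (frob_nonneg _) (hK2k.2 L hLrank) 2).trans hfrobL
  have hw3 : Δ₁ * (n ^ 2 * (d * Δ₂ ^ 2) ^ 2) = (w / 3) ^ 2 := by
    have : Real.sqrt Δ₁ ^ 2 = Δ₁ := Real.sq_sqrt hΔ₁0.le
    rw [hw]; field_simp; nlinarith [this]
  have hentry : |(B * Bᵀ - N * Nᵀ) (Sum.inl i) (Sum.inr j)| ≤ w / 3 := by
    have h1 := (entry_sq_le_frob_sq (B * Bᵀ - N * Nᵀ) (Sum.inl i) (Sum.inr j)).trans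
      (hchain.trans_eq hw3)
    have h2 := Real.sqrt_le_sqrt h1
    rwa [Real.sqrt_sq_eq_abs, Real.sqrt_sq (by positivity)] at h2
  -- the exact value of the (inl i, inr j) entry of B*Bᵀ
  have hBBentry : (B * Bᵀ) (Sum.inl i) (Sum.inr j) = w * (A * C) i j := by
    rw [hBB]
    simp only [Matrix.fromBlocks_apply₁₂, Matrix.transpose_smul, Matrix.transpose_transpose,
      Matrix.mul_smul, Matrix.smul_apply, smul_eq_mul]
  -- (A*C) i j is an integer
  obtain ⟨z, hz⟩ : ∃ z : ℤ, (A * C) i j = z := by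
    have : ∀ l, ∃ z : ℤ, A i l * C l j = z := fun l => by
      obtain ⟨za, hza⟩ := (hA i l).1
      obtain ⟨zc, hzc⟩ := (hC l j).1
      exact ⟨za * zc, by push_cast [hza, hzc]; ring⟩
    choose f hf using this
    exact ⟨∑ l, f l, by rw [Matrix.mul_apply]; push_cast; exact Finset.sum_congr rfl fun l _ => hf l⟩
  -- rounding
  have hx : |(N * Nᵀ) (Sum.inl i) (Sum.inr j) / w - z| ≤ 1 / 3 := by
    have heq : (N * Nᵀ) (Sum.inl i) (Sum.inr j) / w - (z : ℝ) =
        -((B * Bᵀ - N * Nᵀ) (Sum.inl i) (Sum.inr j)) / w := by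
      rw [Matrix.sub_apply, hBBentry, hz]
      field_simp
      ring
    rw [heq, abs_div, abs_neg, abs_of_pos hwpos, div_le_div_iff₀ hwpos (by norm_num : (0:ℝ) < 3)]
    linarith [hentry]
  have hround : round ((N * Nᵀ) (Sum.inl i) (Sum.inr j) / w) = z := by
    have : (N * Nᵀ) (Sum.inl i) (Sum.inr j) / w =
        ((N * Nᵀ) (Sum.inl i) (Sum.inr j) / w - z) + z := by ring
    rw [this, round_add_intCast]
    have h0 : round ((N * Nᵀ) (Sum.inl i) (Sum.inr j) / w - (z:ℝ)) = 0 := by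
      rw [round_eq_zero_iff]
      constructor
      · linarith [abs_le.mp hx]
      · linarith [abs_le.mp hx]
    rw [h0, zero_add]
  rw [hround, hz]
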